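/- Let θ > 0 and let e^{θL}(y,x) be the Mehler kernel (e^θ/√(4π(1-e^{-θ}))) exp(-(y e^{-θ/2} - x)²/(4(1-e^{-θ}))). Then there exists an absolute constant C such that for every bounded measurable r : ℝ → ℝ, the function y ↦ ∫_ℝ e^{θL}(y,x) r(x) dx is differentiable with |d/dy ∫ e^{θL}(y,x) r(x) dx| ≤ C e^{θ/2} (1 - e^{-θ})^{-1/2} ‖r‖_{L^∞} for all y ∈ ℝ. -/

import Mathlib

open Real MeasureTheory Metric

noncomputable def mehlerKernel (θ y x : ℝ) : ℝ :=
  Real.exp θ / Real.sqrt (4 * Real.pi * (1 - Real.exp (-θ))) *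
    Real.exp (-(y * Real.exp (-θ / 2) - x) ^ 2 / (4 * (1 - Real.exp (-θ))))

lemma gauss_abs_aux {a : ℝ} (ha : 0 < a) (u : ℝ) :
    |u| * Real.exp (-u ^ 2 / (4 * a)) ≤ 2 * Real.sqrt a * Real.exp (-u ^ 2 / (8 * a)) := by
  have hE : Real.exp (u ^ 2 / (8 * a)) ^ 2 = Real.exp (u ^ 2 / (4 * a)) := by
    rw [← Real.exp_nat_mul]
    congr 1
    field_simp
    ring
  have h0 : |u| ≤ 2 * Real.sqrt a * Real.exp (u ^ 2 / (8 * a)) := by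
    have hsq : u ^ 2 ≤ (2 * Real.sqrt a * Real.exp (u ^ 2 / (8 * a))) ^ 2 := by
      have h1 : (2 * Real.sqrt a * Real.exp (u ^ 2 / (8 * a))) ^ 2
          = 4 * a * Real.exp (u ^ 2 / (4 * a)) := by
        rw [mul_pow, mul_pow, Real.sq_sqrt ha.le, hE]; ring
      rw [h1]
      have h2 := Real.add_one_le_exp (u ^ 2 / (4 * a))
      have h3 : u ^ 2 / (4 * a) * (4 * a) = u ^ 2 := by field_simp
      nlinarith [Real.exp_pos (u ^ 2 / (4 * a))]
    calc |u| = Real.sqrt (u ^ 2) := (Real.sqrt_sq_eq_abs u).symm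
      _ ≤ Real.sqrt ((2 * Real.sqrt a * Real.exp (u ^ 2 / (8 * a))) ^ 2) := Real.sqrt_le_sqrt hsq
      _ = 2 * Real.sqrt a * Real.exp (u ^ 2 / (8 * a)) := Real.sqrt_sq (by positivity)
  calc |u| * Real.exp (-u ^ 2 / (4 * a))
      ≤ 2 * Real.sqrt a * Real.exp (u ^ 2 / (8 * a)) * Real.exp (-u ^ 2 / (4 * a)) := by
        gcongr
    _ = 2 * Real.sqrt a * Real.exp (-u ^ 2 / (8 * a)) := by
        rw [mul_assoc, ← Real.exp_add]
        congr 2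
        field_simp
        ring

lemma aux_deriv {a b c : ℝ} (ha : 0 < a) (hb : 0 < b) (hb1 : b ≤ 1) (hc : 0 ≤ c)
    (r : ℝ → ℝ) (hr : Measurable r) (M : ℝ) (hM : ∀ x, |r x| ≤ M) (y : ℝ) :
    HasDerivAt (fun y' => ∫ x : ℝ, c * Real.exp (-(y' * b - x) ^ 2 / (4 * a)) * r x)
      (∫ x : ℝ, c * b / (2 * a) * (x - y * b) * Real.exp (-(y * b - x) ^ 2 / (4 * a)) * r x) y ∧
    |∫ x : ℝ, c * b / (2 * a) * (x - y * b) * Real.exp (-(y * b - x) ^ 2 / (4 * a)) * r x|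
      ≤ M * (c * b / (2 * a)) * (2 * Real.sqrt a) * Real.sqrt (π / (1 / (8 * a))) := by
  have hM0 : 0 ≤ M := le_trans (abs_nonneg _) (hM 0)
  have hmeas : ∀ y' : ℝ,
      AEStronglyMeasurable (fun x => c * Real.exp (-(y' * b - x) ^ 2 / (4 * a)) * r x) volume := by
    intro y'
    apply Measurable.aestronglyMeasurable
    fun_prop
  have hF'meas : ∀ y' : ℝ, AEStronglyMeasurable
      (fun x => c * b / (2 * a) * (x - y' * b) * Real.exp (-(y' * b - x) ^ 2 / (4 * a)) * r x)
      volume := by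
    intro y'
    apply Measurable.aestronglyMeasurable
    fun_prop
  have hF_int : Integrable (fun x => c * Real.exp (-(y * b - x) ^ 2 / (4 * a)) * r x) := by
    have h1 : Integrable (fun x : ℝ => c * M * Real.exp (-(1 / (4 * a)) * (x - y * b) ^ 2)) :=
      ((integrable_exp_neg_mul_sq (by positivity : (0:ℝ) < 1 / (4 * a))).comp_sub_right
        (y * b)).const_mul (c * M)
    refine h1.mono' (hmeas y) (ae_of_all _ fun x => ?_)
    calc ‖c * Real.exp (-(y * b - x) ^ 2 / (4 * a)) * r x‖
        = c * Real.exp (-(y * b - x) ^ 2 / (4 * a)) * |r x| := by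
          rw [Real.norm_eq_abs, abs_mul, abs_mul, abs_of_nonneg hc,
            abs_of_nonneg (Real.exp_nonneg _)]
      _ ≤ c * Real.exp (-(y * b - x) ^ 2 / (4 * a)) * M :=
          mul_le_mul_of_nonneg_left (hM x) (by positivity)
      _ = c * M * Real.exp (-(1 / (4 * a)) * (x - y * b) ^ 2) := by
          rw [show -(y * b - x) ^ 2 / (4 * a) = -(1 / (4 * a)) * (x - y * b) ^ 2 from by ring]
          ring
  have hptw : ∀ (y' : ℝ), ∀ x : ℝ,
      ‖c * b / (2 * a) * (x - y' * b) * Real.exp (-(y' * b - x) ^ 2 / (4 * a)) * r x‖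
        ≤ c * b / (2 * a) * (2 * Real.sqrt a * Real.exp (-(y' * b - x) ^ 2 / (8 * a))) * M := by
    intro y' x
    calc ‖c * b / (2 * a) * (x - y' * b) * Real.exp (-(y' * b - x) ^ 2 / (4 * a)) * r x‖
        = c * b / (2 * a) * (|y' * b - x| * Real.exp (-(y' * b - x) ^ 2 / (4 * a))) * |r x| := by
          rw [Real.norm_eq_abs, abs_mul, abs_mul, abs_mul,
            abs_of_nonneg (show (0:ℝ) ≤ c * b / (2 * a) by positivity),
            abs_of_nonneg (Real.exp_nonneg _), abs_sub_comm x (y' * b)]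
          ring
      _ ≤ c * b / (2 * a) * (2 * Real.sqrt a * Real.exp (-(y' * b - x) ^ 2 / (8 * a))) * M := by
          refine mul_le_mul ?_ (hM x) (abs_nonneg _) (by positivity)
          exact mul_le_mul_of_nonneg_left (gauss_abs_aux ha _) (by positivity)
  have h_bound : ∀ x : ℝ, ∀ y' ∈ ball y 1,
      ‖c * b / (2 * a) * (x - y' * b) * Real.exp (-(y' * b - x) ^ 2 / (4 * a)) * r x‖
        ≤ M * (c * b / (2 * a)) * (2 * Real.sqrt a) * Real.exp (1 / (8 * a)) *
            Real.exp (-(1 / (16 * a)) * (x - y * b) ^ 2) := by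
    intro x y' hy'
    have hd : |y' - y| < 1 := by
      simpa [Real.dist_eq] using hy'
    have hexp2 : Real.exp (-(y' * b - x) ^ 2 / (8 * a)) ≤
        Real.exp (1 / (8 * a)) * Real.exp (-(1 / (16 * a)) * (x - y * b) ^ 2) := by
      rw [← Real.exp_add]
      apply Real.exp_le_exp.mpr
      have hsq1 : (y - y') ^ 2 ≤ 1 := by
        nlinarith [abs_nonneg (y' - y), sq_abs (y' - y)]
      have hq : ((y - y') * b) ^ 2 ≤ 1 := by
        have h2 : b ^ 2 ≤ 1 := by nlinarith
        calc ((y - y') * b) ^ 2 = (y - y') ^ 2 * b ^ 2 := by ring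
          _ ≤ 1 := by nlinarith [sq_nonneg (y - y'), sq_nonneg b]
      have h1 : (y * b - x) ^ 2 ≤ 2 * (y' * b - x) ^ 2 + 2 := by
        nlinarith [sq_nonneg ((y' * b - x) - (y - y') * b), hq]
      rw [← sub_nonneg]
      have heq : 1 / (8 * a) + -(1 / (16 * a)) * (x - y * b) ^ 2 - -(y' * b - x) ^ 2 / (8 * a)
          = (2 * (y' * b - x) ^ 2 + 2 - (y * b - x) ^ 2) / (16 * a) := by
        field_simp
        ring
      rw [heq]
      exact div_nonneg (by linarith) (by positivity)
    calc ‖c * b / (2 * a) * (x - y' * b) * Real.exp (-(y' * b - x) ^ 2 / (4 * a)) * r x‖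
        ≤ c * b / (2 * a) * (2 * Real.sqrt a * Real.exp (-(y' * b - x) ^ 2 / (8 * a))) * M :=
          hptw y' x
      _ ≤ c * b / (2 * a) * (2 * Real.sqrt a *
            (Real.exp (1 / (8 * a)) * Real.exp (-(1 / (16 * a)) * (x - y * b) ^ 2))) * M := by
          refine mul_le_mul_of_nonneg_right ?_ hM0
          refine mul_le_mul_of_nonneg_left ?_ (by positivity)
          exact mul_le_mul_of_nonneg_left hexp2 (by positivity)
      _ = M * (c * b / (2 * a)) * (2 * Real.sqrt a) * Real.exp (1 / (8 * a)) *
            Real.exp (-(1 / (16 * a)) * (x - y * b) ^ 2) := by ring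
  have bound_int : Integrable (fun x : ℝ => M * (c * b / (2 * a)) * (2 * Real.sqrt a) *
      Real.exp (1 / (8 * a)) * Real.exp (-(1 / (16 * a)) * (x - y * b) ^ 2)) :=
    ((integrable_exp_neg_mul_sq (by positivity : (0:ℝ) < 1 / (16 * a))).comp_sub_right
      (y * b)).const_mul _
  have h_diff : ∀ x : ℝ, ∀ y' ∈ ball y 1,
      HasDerivAt (fun y' => c * Real.exp (-(y' * b - x) ^ 2 / (4 * a)) * r x)
        (c * b / (2 * a) * (x - y' * b) * Real.exp (-(y' * b - x) ^ 2 / (4 * a)) * r x) y' := by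
    intro x y' _
    have h0 : HasDerivAt (fun z : ℝ => z * b - x) b y' := by
      simpa using ((hasDerivAt_id y').mul_const b).sub_const x
    have h1 : HasDerivAt (fun z : ℝ => -(z * b - x) ^ 2 / (4 * a))
        (-(2 * (y' * b - x) * b) / (4 * a)) y' := by
      have h := (h0.pow 2).neg.div_const (4 * a)
      norm_num at h
      convert h using 1
    have h2 := ((h1.exp).const_mul c).mul_const (r x)
    refine h2.congr_deriv ?_
    ring
  have key := hasDerivAt_integral_of_dominated_loc_of_deriv_le (μ := volume) (ball_mem_nhds y one_pos)
    (Filter.Eventually.of_forall hmeas) hF_int (hF'meas y) (ae_of_all _ h_bound) bound_int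
    (ae_of_all _ fun x => h_diff x)
  refine ⟨key.2, ?_⟩
  have hGint : Integrable (fun x : ℝ => M * (c * b / (2 * a)) * (2 * Real.sqrt a) *
      Real.exp (-(1 / (8 * a)) * (x - y * b) ^ 2)) :=
    ((integrable_exp_neg_mul_sq (by positivity : (0:ℝ) < 1 / (8 * a))).comp_sub_right
      (y * b)).const_mul _
  have hptw2 : ∀ x : ℝ,
      ‖c * b / (2 * a) * (x - y * b) * Real.exp (-(y * b - x) ^ 2 / (4 * a)) * r x‖
        ≤ M * (c * b / (2 * a)) * (2 * Real.sqrt a) *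
            Real.exp (-(1 / (8 * a)) * (x - y * b) ^ 2) := by
    intro x
    refine (hptw y x).trans (le_of_eq ?_)
    rw [show -(y * b - x) ^ 2 / (8 * a) = -(1 / (8 * a)) * (x - y * b) ^ 2 from by ring]
    ring
  have hnorm := norm_integral_le_of_norm_le hGint (ae_of_all _ hptw2)
  rw [Real.norm_eq_abs] at hnorm
  refine hnorm.trans (le_of_eq ?_)
  rw [MeasureTheory.integral_const_mul,
    show (∫ x : ℝ, Real.exp (-(1 / (8 * a)) * (x - y * b) ^ 2)) =
        ∫ x : ℝ, Real.exp (-(1 / (8 * a)) * x ^ 2) from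
      integral_sub_right_eq_self (fun x => Real.exp (-(1 / (8 * a)) * x ^ 2)) (y * b),
    integral_gaussian]

theorem stmt_10 :
    ∃ C > 0, ∀ θ : ℝ, 0 < θ → ∀ r : ℝ → ℝ, Measurable r → ∀ M : ℝ,
      (∀ x, |r x| ≤ M) → ∀ y : ℝ,
      ∃ d : ℝ, HasDerivAt (fun y => ∫ x : ℝ, mehlerKernel θ y x * r x) d y ∧
        |d| ≤ C * Real.exp (θ / 2) * (1 - Real.exp (-θ)) ^ (-(1 : ℝ) / 2) * M := by
  refine ⟨2, by norm_num, ?_⟩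
  intro θ hθ r hr M hM y
  have hM0 : 0 ≤ M := le_trans (abs_nonneg _) (hM 0)
  have ha : 0 < 1 - Real.exp (-θ) := by
    have : Real.exp (-θ) < 1 := Real.exp_lt_one_iff.mpr (by linarith)
    linarith
  have hb : 0 < Real.exp (-θ / 2) := Real.exp_pos _
  have hb1 : Real.exp (-θ / 2) ≤ 1 :=
    (Real.exp_lt_one_iff.mpr (by linarith)).le
  have hc : 0 ≤ Real.exp θ / Real.sqrt (4 * π * (1 - Real.exp (-θ))) := by positivity
  obtain ⟨hderiv, hbound⟩ := aux_deriv ha hb hb1 hc r hr M hM y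
  simp only [mehlerKernel]
  refine ⟨_, hderiv, ?_⟩
  refine hbound.trans ?_
  set a := 1 - Real.exp (-θ) with ha_def
  have hp : (0:ℝ) < Real.sqrt π := Real.sqrt_pos.mpr Real.pi_pos
  have hs : (0:ℝ) < Real.sqrt a := Real.sqrt_pos.mpr ha
  have h4πa : Real.sqrt (4 * π * a) = 2 * (Real.sqrt π * Real.sqrt a) := by
    rw [show 4 * π * a = (2 * (Real.sqrt π * Real.sqrt a)) ^ 2 by
      rw [mul_pow, mul_pow, Real.sq_sqrt Real.pi_pos.le, Real.sq_sqrt ha.le]; ring]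
    exact Real.sqrt_sq (by positivity)
  have h8aπ : Real.sqrt (π / (1 / (8 * a))) = Real.sqrt 2 * (2 * (Real.sqrt π * Real.sqrt a)) := by
    rw [show π / (1 / (8 * a)) = 2 * (2 * (Real.sqrt π * Real.sqrt a)) ^ 2 by
      rw [mul_pow, mul_pow, Real.sq_sqrt Real.pi_pos.le, Real.sq_sqrt ha.le]; field_simp; ring,
      Real.sqrt_mul (by norm_num), Real.sqrt_sq (by positivity)]
  have hrpow : a ^ (-(1:ℝ) / 2) = (Real.sqrt a)⁻¹ := by
    rw [show (-(1:ℝ) / 2) = -(1 / 2 : ℝ) by ring, Real.rpow_neg ha.le, ← Real.sqrt_eq_rpow]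
  have he : Real.exp θ * Real.exp (-θ / 2) = Real.exp (θ / 2) := by
    rw [← Real.exp_add]; ring_nf
  have hkey : M * (Real.exp θ / Real.sqrt (4 * π * a) * Real.exp (-θ / 2) / (2 * a)) *
      (2 * Real.sqrt a) * Real.sqrt (π / (1 / (8 * a)))
      = Real.sqrt 2 * Real.exp (θ / 2) * (Real.sqrt a)⁻¹ * M := by
    obtain ⟨s, hs0, hss, hseq⟩ : ∃ s : ℝ, 0 < s ∧ s * s = a ∧ Real.sqrt a = s :=
      ⟨Real.sqrt a, hs, Real.mul_self_sqrt ha.le, rfl⟩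
    rw [h4πa, h8aπ, ← he, hseq, ← hss]
    field_simp
  rw [hrpow, hkey]
  have hsqrt2 : Real.sqrt 2 ≤ 2 := by
    nlinarith [Real.sq_sqrt (by norm_num : (0:ℝ) ≤ 2), Real.sqrt_nonneg 2]
  gcongr
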